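/- Let D ⊂ ℝ^d be a bounded open set, and let V : ℝ^d → ℝ be continuous with V(x) ≥ 0 on D. Let λ > 0, let u : ℝ^d → ℝ be twice continuously differentiable on D, continuous on the closure of D, vanishing on the boundary ∂D, satisfying −Δu + V u = λ u in D and normalized by sup_{x ∈ D} |u(x)| ≤ 1, and let ψ : ℝ^d → ℝ be twice continuously differentiable on D, continuous on the closure of D, vanishing on ∂D, and satisfying the landscape equation −Δψ + V ψ = 1 in D. Then the pointwise bound |u(x)| ≤ λ · ψ(x) holds for every x ∈ D (in particular ψ ≥ 0 on D). -/

import Mathlib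

/-- The Laplacian `Δw(x) = ∑_{i=1}^d ∂²w/∂x_i²(x)` of `w : ℝ^d → ℝ`, expressed via
iterated (total) Fréchet derivatives in the coordinate directions. -/
noncomputable def lapl (d : ℕ) (w : (Fin d → ℝ) → ℝ) (x : Fin d → ℝ) : ℝ :=
  ∑ i, fderiv ℝ (fun y => fderiv ℝ w y (Pi.single i 1)) x (Pi.single i 1)

open Filter Topology Set
lemma second_deriv_nonneg_of_isLocalMin {f f' : ℝ → ℝ} {c : ℝ}
    (hmin : IsLocalMin f 0)
    (hf : ∀ᶠ t in 𝓝 (0:ℝ), HasDerivAt f (f' t) t)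
    (hf' : HasDerivAt f' c 0) : 0 ≤ c := by
  by_contra hc
  push_neg at hc
  have h0 : f' 0 = 0 := hmin.hasDerivAt_eq_zero hf.self_of_nhds
  have hslope : Tendsto (slope f' 0) (𝓝[≠] (0:ℝ)) (𝓝 c) :=
    hasDerivAt_iff_tendsto_slope.mp hf'
  have hneg : ∀ᶠ t in 𝓝[>] (0:ℝ), f' t < 0 := by
    have h1 : ∀ᶠ t in 𝓝[≠] (0:ℝ), slope f' 0 t < 0 :=
      hslope.eventually_lt_const hc
    have h2 : ∀ᶠ t in 𝓝[>] (0:ℝ), slope f' 0 t < 0 :=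
      h1.filter_mono (nhdsWithin_mono _ fun t ht => ne_of_gt ht)
    filter_upwards [h2, self_mem_nhdsWithin] with t ht ht'
    have : slope f' 0 t = f' t / t := by
      simp [slope_def_field, h0]
    rw [this] at ht
    have ht'' : (0:ℝ) < t := ht'
    rcases div_neg_iff.mp ht with ⟨ha, hb⟩ | ⟨ha, hb⟩ <;> linarith
  obtain ⟨uu, huu, hIoo⟩ := mem_nhdsGT_iff_exists_Ioo_subset.mp hneg
  have hE : ∀ᶠ t in 𝓝 (0:ℝ), HasDerivAt f (f' t) t ∧ f 0 ≤ f t := hf.and hmin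
  obtain ⟨η, hη, hball⟩ := Metric.eventually_nhds_iff_ball.mp hE
  set b := min (η / 2) (uu / 2) with hb
  have hb0 : 0 < b := by
    have : (0:ℝ) < uu := huu
    positivity
  have hbη : b < η := lt_of_le_of_lt (min_le_left _ _) (by linarith)
  have hbu : b < uu := lt_of_le_of_lt (min_le_right _ _) (by
    have : (0:ℝ) < uu := huu
    linarith)
  have hsub : Icc (0:ℝ) b ⊆ Metric.ball 0 η := by
    intro t ht
    simp only [Metric.mem_ball, Real.dist_eq, sub_zero]
    rw [abs_of_nonneg ht.1]
    exact lt_of_le_of_lt ht.2 hbη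
  have hcont : ContinuousOn f (Icc 0 b) := fun t ht =>
    ((hball t (hsub ht)).1).continuousAt.continuousWithinAt
  have hderiv : ∀ t ∈ interior (Icc (0:ℝ) b), deriv f t < 0 := by
    intro t ht
    rw [interior_Icc] at ht
    have h1 : HasDerivAt f (f' t) t := (hball t (hsub ⟨le_of_lt ht.1, le_of_lt ht.2⟩)).1
    rw [h1.deriv]
    exact hIoo ⟨ht.1, lt_trans ht.2 hbu⟩
  have hanti : StrictAntiOn f (Icc 0 b) :=
    strictAntiOn_of_deriv_neg (convex_Icc 0 b) hcont hderiv
  have h1 : f b < f 0 := hanti (left_mem_Icc.2 (le_of_lt hb0)) (right_mem_Icc.2 (le_of_lt hb0)) hb0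
  have h2 : f 0 ≤ f b := (hball b (hsub (right_mem_Icc.2 (le_of_lt hb0)))).2
  linarith


lemma diff_fderiv_apply {d : ℕ} {D : Set (Fin d → ℝ)} (hDo : IsOpen D)
    {f : (Fin d → ℝ) → ℝ} (hf : ContDiffOn ℝ 2 f D) {x : Fin d → ℝ} (hx : x ∈ D)
    (e : Fin d → ℝ) : DifferentiableAt ℝ (fun y => fderiv ℝ f y e) x := by
  have h1 : ContDiffAt ℝ 1 (fderiv ℝ f) x :=
    (hf.contDiffAt (hDo.mem_nhds hx)).fderiv_right (by norm_num)
  exact (h1.differentiableAt one_ne_zero).clm_apply (differentiableAt_const e)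

lemma lapl_combo {d : ℕ} {D : Set (Fin d → ℝ)} (hDo : IsOpen D)
    {f g : (Fin d → ℝ) → ℝ} (hf : ContDiffOn ℝ 2 f D) (hg : ContDiffOn ℝ 2 g D)
    (a b cst : ℝ) {x : Fin d → ℝ} (hx : x ∈ D) :
    lapl d (fun y => a * f y + b * g y + cst) x = a * lapl d f x + b * lapl d g x := by
  unfold lapl
  rw [Finset.mul_sum, Finset.mul_sum, ← Finset.sum_add_distrib]
  apply Finset.sum_congr rfl
  intro i _
  set e : Fin d → ℝ := Pi.single i 1
  have hev : (fun y => fderiv ℝ (fun z => a * f z + b * g z + cst) y e)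
      =ᶠ[𝓝 x] (fun y => a * fderiv ℝ f y e + b * fderiv ℝ g y e) := by
    filter_upwards [hDo.mem_nhds hx] with y hy
    have hfd : DifferentiableAt ℝ f y := (hf.contDiffAt (hDo.mem_nhds hy)).differentiableAt (by norm_num)
    have hgd : DifferentiableAt ℝ g y := (hg.contDiffAt (hDo.mem_nhds hy)).differentiableAt (by norm_num)
    rw [fderiv_add_const, fderiv_fun_add ((hfd.const_mul a)) ((hgd.const_mul b)),
      fderiv_const_mul hfd, fderiv_const_mul hgd]
    simp
  rw [Filter.EventuallyEq.fderiv_eq hev]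
  have hF : DifferentiableAt ℝ (fun y => fderiv ℝ f y e) x := diff_fderiv_apply hDo hf hx e
  have hG : DifferentiableAt ℝ (fun y => fderiv ℝ g y e) x := diff_fderiv_apply hDo hg hx e
  rw [fderiv_fun_add ((hF.const_mul a)) ((hG.const_mul b)), fderiv_const_mul hF, fderiv_const_mul hG]
  simp

lemma lapl_nonneg_of_isLocalMin {d : ℕ} {D : Set (Fin d → ℝ)} (hDo : IsOpen D)
    {w : (Fin d → ℝ) → ℝ} (hw : ContDiffOn ℝ 2 w D) {p : Fin d → ℝ} (hp : p ∈ D)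
    (hmin : IsLocalMin w p) : 0 ≤ lapl d w p := by
  apply Finset.sum_nonneg
  intro i _
  set e : Fin d → ℝ := Pi.single i 1 with he
  set L : ℝ → (Fin d → ℝ) := fun t => p + t • e with hL
  have hL0 : L 0 = p := by simp [hL]
  have hLc : Continuous L := by continuity
  have hLd : ∀ t : ℝ, HasDerivAt L e t := by
    intro t
    have : HasDerivAt (fun s : ℝ => s • e) ((1:ℝ) • e) t := (hasDerivAt_id t).smul_const e
    have h2 := this.const_add p
    rw [one_smul] at h2
    exact h2
  have hmem : ∀ᶠ t in 𝓝 (0:ℝ), L t ∈ D := by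
    have : Tendsto L (𝓝 0) (𝓝 p) := by rw [← hL0]; exact hLc.continuousAt
    exact this.eventually_mem (hDo.mem_nhds hp)
  have hf : ∀ᶠ t in 𝓝 (0:ℝ), HasDerivAt (fun t => w (L t)) ((fun t => fderiv ℝ w (L t) e) t) t := by
    filter_upwards [hmem] with t ht
    have hwd : DifferentiableAt ℝ w (L t) :=
      (hw.contDiffAt (hDo.mem_nhds ht)).differentiableAt (by norm_num)
    exact hwd.hasFDerivAt.comp_hasDerivAt t (hLd t)
  have hF : DifferentiableAt ℝ (fun y => fderiv ℝ w y e) p := diff_fderiv_apply hDo hw hp e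
  have hf' : HasDerivAt (fun t => fderiv ℝ w (L t) e)
      (fderiv ℝ (fun y => fderiv ℝ w y e) p e) 0 := by
    have hF' := hF.hasFDerivAt
    rw [← hL0] at hF'
    have := hF'.comp_hasDerivAt 0 (hLd 0)
    simpa [hL0, Function.comp_def] using this
  have hminf : IsLocalMin (fun t => w (L t)) 0 := by
    have hT : Tendsto L (𝓝 0) (𝓝 p) := by rw [← hL0]; exact hLc.continuousAt
    have := hT.eventually hmin
    simpa [IsLocalMin, IsMinFilter, hL0] using this
  exact second_deriv_nonneg_of_isLocalMin hminf hf hf'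



lemma lapl_exp {d : ℕ} (i0 : Fin d) (α : ℝ) (x : Fin d → ℝ) :
    lapl d (fun y => Real.exp (α * y i0)) x = α ^ 2 * Real.exp (α * x i0) := by
  set l : (Fin d → ℝ) →L[ℝ] ℝ := α • (ContinuousLinearMap.proj i0) with hldef
  have hco : ⇑l = fun y : Fin d → ℝ => α * y i0 := by
    funext y; simp [hldef]
  have hb : ∀ y, HasFDerivAt (fun y : Fin d → ℝ => Real.exp (α * y i0))
      (Real.exp (α * y i0) • l) y := by
    intro y
    have h1 : HasFDerivAt (fun y : Fin d → ℝ => α * y i0) l y := by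
      rw [← hco]; exact l.hasFDerivAt
    have := (Real.hasDerivAt_exp (α * y i0)).comp_hasFDerivAt y h1
    simpa [Function.comp_def] using this
  unfold lapl
  have hterm : ∀ i : Fin d,
      fderiv ℝ (fun y => fderiv ℝ (fun y : Fin d → ℝ => Real.exp (α * y i0)) y (Pi.single i 1)) x (Pi.single i 1)
      = (l (Pi.single i 1))^2 * Real.exp (α * x i0) := by
    intro i
    set e : Fin d → ℝ := Pi.single i 1
    set κ : ℝ := l e with hκ
    have hin : (fun y => fderiv ℝ (fun y : Fin d → ℝ => Real.exp (α * y i0)) y e)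
        = fun y => κ * Real.exp (α * y i0) := by
      funext y
      rw [(hb y).fderiv]
      simp [hκ, mul_comm]
    rw [hin, fderiv_const_mul (hb x).differentiableAt, (hb x).fderiv]
    simp [hκ]
    ring
  calc ∑ i, fderiv ℝ (fun y => fderiv ℝ (fun y : Fin d → ℝ => Real.exp (α * y i0)) y (Pi.single i 1)) x (Pi.single i 1)
      = ∑ i, (l (Pi.single i 1))^2 * Real.exp (α * x i0) := Finset.sum_congr rfl fun i _ => hterm i
    _ = α ^ 2 * Real.exp (α * x i0) := by
        have : ∀ i : Fin d, (l (Pi.single i 1))^2 * Real.exp (α * x i0)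
            = if i0 = i then α ^ 2 * Real.exp (α * x i0) else 0 := by
          intro i
          have : l (Pi.single i 1) = α * ((Pi.single i (1:ℝ) : Fin d → ℝ) i0) := by simp [hldef]
          rw [this, Pi.single_apply]
          by_cases h : i0 = i <;> simp [h]
        rw [Finset.sum_congr rfl fun i _ => this i, Finset.sum_ite_eq]
        simp

lemma maxprin {d : ℕ} (hd : 0 < d) {D : Set (Fin d → ℝ)} (hDo : IsOpen D)
    (hDb : Bornology.IsBounded D) {V : (Fin d → ℝ) → ℝ} {C : ℝ}
    (_hVb : ∀ x ∈ D, V x ≤ C) (hVpos : ∀ x ∈ D, 0 ≤ V x)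
    {w : (Fin d → ℝ) → ℝ} (hw2 : ContDiffOn ℝ 2 w D)
    (hwc : ContinuousOn w (closure D)) (hwb : ∀ x ∈ frontier D, 0 ≤ w x)
    (hL : ∀ x ∈ D, 0 ≤ -lapl d w x + V x * w x) :
    ∀ x ∈ D, 0 ≤ w x := by
  intro x hx
  set i0 : Fin d := ⟨0, hd⟩
  set α : ℝ := Real.sqrt (max C 0 + 1) with hα
  have hα2 : α ^ 2 = max C 0 + 1 := Real.sq_sqrt (by positivity)
  set bb : (Fin d → ℝ) → ℝ := fun y => Real.exp (α * y i0) with hbb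
  have hbbc : Continuous bb := by fun_prop
  have hbbsm : ContDiff ℝ 2 bb := by
    apply Real.contDiff_exp.comp
    exact contDiff_const.mul ((ContinuousLinearMap.proj i0 : (Fin d → ℝ) →L[ℝ] ℝ).contDiff)
  have hK : IsCompact (closure D) := hDb.isCompact_closure
  have hne : (closure D).Nonempty := ⟨x, subset_closure hx⟩
  obtain ⟨q, hq, hqmax⟩ := hK.exists_isMaxOn hne hbbc.continuousOn
  set M := bb q with hM
  have hMb : ∀ y ∈ closure D, bb y ≤ M := hqmax
  have key : ∀ ε : ℝ, 0 < ε → ∀ y ∈ closure D, 0 ≤ w y + ε * (M - bb y) := by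
    intro ε hε
    by_contra hcon
    push_neg at hcon
    obtain ⟨y0, hy0, hy0n⟩ := hcon
    set Wε : (Fin d → ℝ) → ℝ := fun y => w y + ε * (M - bb y) with hWε
    have hWc : ContinuousOn Wε (closure D) :=
      hwc.add (continuousOn_const.mul (continuousOn_const.sub hbbc.continuousOn))
    obtain ⟨p, hpK, hpmin⟩ := hK.exists_isMinOn hne hWc
    have hpneg : Wε p < 0 := lt_of_le_of_lt (hpmin hy0) hy0n
    have hpD : p ∈ D := by
      by_contra hpD
      have hpf : p ∈ frontier D := by
        rw [hDo.frontier_eq]; exact ⟨hpK, hpD⟩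
      have h1 : 0 ≤ w p := hwb p hpf
      have h2 : bb p ≤ M := hMb p hpK
      have : (0:ℝ) ≤ Wε p := by
        have : Wε p = w p + ε * (M - bb p) := rfl
        nlinarith
      linarith
    have hloc : IsLocalMin Wε p :=
      hpmin.isLocalMin (mem_of_superset (hDo.mem_nhds hpD) subset_closure)
    have hW2 : ContDiffOn ℝ 2 Wε D :=
      hw2.add (contDiffOn_const.mul (contDiffOn_const.sub hbbsm.contDiffOn))
    have hlap : 0 ≤ lapl d Wε p := lapl_nonneg_of_isLocalMin hDo hW2 hpD hloc
    have hcomb : lapl d Wε p = 1 * lapl d w p + (-ε) * lapl d bb p := by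
      have heq : Wε = fun y => 1 * w y + (-ε) * bb y + ε * M := by
        funext y; simp only [hWε]; ring
      rw [heq]
      exact lapl_combo hDo hw2 hbbsm.contDiffOn 1 (-ε) (ε * M) hpD
    have hlapb : lapl d bb p = α ^ 2 * Real.exp (α * p i0) := lapl_exp i0 α p
    rw [hcomb, hlapb, one_mul] at hlap
    have hLp := hL p hpD
    have hVp := hVpos p hpD
    have hMp : bb p ≤ M := hMb p (subset_closure hpD)
    have hexp : 0 < Real.exp (α * p i0) := Real.exp_pos _
    have h1 : V p * Wε p ≤ 0 := mul_nonpos_of_nonneg_of_nonpos hVp (le_of_lt hpneg)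
    have hWval : Wε p = w p + ε * (M - bb p) := rfl
    have haux1 : 0 ≤ V p * (M - bb p) := mul_nonneg hVp (by linarith)
    have hα2pos : 0 < α ^ 2 := by rw [hα2]; positivity
    have haux2 : 0 < ε * (α ^ 2 * Real.exp (α * p i0)) := by positivity
    have hbbp : bb p = Real.exp (α * p i0) := rfl
    rw [hWval] at h1
    nlinarith [hlap, h1, hLp, haux1, haux2]
  -- conclude
  have hMx : 0 ≤ M - bb x := by
    have := hMb x (subset_closure hx)
    linarith
  by_contra hneg
  push_neg at hneg
  set ε : ℝ := (-w x) / (M - bb x + 1) with hε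
  have hεpos : 0 < ε := by
    apply div_pos (by linarith) (by linarith)
  have hk := key ε hεpos x (subset_closure hx)
  have hεeq : ε * (M - bb x + 1) = -w x := by
    rw [hε]; exact div_mul_cancel₀ _ (ne_of_gt (by linarith))
  nlinarith [hk, hεeq, hεpos, hMx]

/-- Filoche–Mayboroda landscape bound: on a bounded open set `D` with continuous
potential `V ≥ 0`, a classical eigenfunction `u` (eigenvalue `λ > 0`, vanishing on
`∂D`, `sup_D |u| ≤ 1`) is pointwise dominated by `λ` times the landscape function `ψ`
solving `−Δψ + Vψ = 1` with zero boundary values; in particular `ψ ≥ 0` on `D`. -/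
theorem landscape_pointwise_bound
    (d : ℕ) (D : Set (Fin d → ℝ)) (hDo : IsOpen D) (hDb : Bornology.IsBounded D)
    (V : (Fin d → ℝ) → ℝ) (hV : Continuous V) (hVpos : ∀ x ∈ D, 0 ≤ V x)
    (lam : ℝ) (hlam : 0 < lam)
    (u ψ : (Fin d → ℝ) → ℝ)
    (hu2 : ContDiffOn ℝ 2 u D) (huc : ContinuousOn u (closure D))
    (hub : ∀ x ∈ frontier D, u x = 0)
    (hupde : ∀ x ∈ D, -lapl d u x + V x * u x = lam * u x)
    (hunorm : ∀ x ∈ D, |u x| ≤ 1)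
    (hψ2 : ContDiffOn ℝ 2 ψ D) (hψc : ContinuousOn ψ (closure D))
    (hψb : ∀ x ∈ frontier D, ψ x = 0)
    (hψpde : ∀ x ∈ D, -lapl d ψ x + V x * ψ x = 1) :
    ∀ x ∈ D, |u x| ≤ lam * ψ x ∧ 0 ≤ ψ x := by
  obtain ⟨C, hC⟩ := hDb.isCompact_closure.exists_bound_of_continuousOn hV.continuousOn
  have hVb : ∀ x ∈ D, V x ≤ C := fun x hx =>
    le_trans (le_abs_self _) (by simpa [Real.norm_eq_abs] using hC x (subset_closure hx))
  intro x hx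
  rcases Nat.eq_zero_or_pos d with hd | hd
  · -- dimension zero: the Laplacian vanishes identically
    subst hd
    have hlap0 : ∀ (f : (Fin 0 → ℝ) → ℝ) (y : Fin 0 → ℝ), lapl 0 f y = 0 := by
      intro f y; simp [lapl]
    have hV1 : V x * ψ x = 1 := by
      have := hψpde x hx; rw [hlap0] at this; linarith
    have hVu : V x * u x = lam * u x := by
      have := hupde x hx; rw [hlap0] at this; linarith
    have hVx : 0 < V x := by
      rcases lt_or_eq_of_le (hVpos x hx) with h | h
      · exact h
      · exfalso; rw [← h] at hV1; simp at hV1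
    have hψx : 0 < ψ x := by nlinarith
    rcases eq_or_ne (u x) 0 with h | h
    · refine ⟨?_, le_of_lt hψx⟩
      rw [h, abs_zero]
      positivity
    · have hVlam : V x = lam := by
        have h3 : (V x - lam) * u x = 0 := by ring_nf; linarith
        rcases mul_eq_zero.mp h3 with h4 | h4
        · linarith
        · exact absurd h4 h
      refine ⟨?_, le_of_lt hψx⟩
      calc |u x| ≤ 1 := hunorm x hx
        _ = lam * ψ x := by rw [← hVlam]; linarith
  · -- positive dimension: maximum principle with exponential barrier
    have key : ∀ c : ℝ, c = 1 ∨ c = -1 → ∀ y ∈ D, 0 ≤ lam * ψ y + c * u y := by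
      intro c hc
      apply maxprin hd hDo hDb hVb hVpos
        ((contDiffOn_const.mul hψ2).add (contDiffOn_const.mul hu2))
        ((continuousOn_const.mul hψc).add (continuousOn_const.mul huc))
      · intro y hy
        rw [hψb y hy, hub y hy]
        simp
      · intro y hy
        have h1 := hψpde y hy
        have h2 := hupde y hy
        have hcomb : lapl d (fun y => lam * ψ y + c * u y) y
            = lam * lapl d ψ y + c * lapl d u y := by
          have heq : (fun y => lam * ψ y + c * u y)
              = fun y => lam * ψ y + c * u y + 0 := by funext y; ring
          rw [heq]
          exact lapl_combo hDo hψ2 hu2 lam c 0 hy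
        show 0 ≤ -lapl d (fun y => lam * ψ y + c * u y) y + V y * (lam * ψ y + c * u y)
        have key2 : -lapl d (fun y => lam * ψ y + c * u y) y + V y * (lam * ψ y + c * u y)
            = lam + c * (lam * u y) := by
          rw [hcomb]
          linear_combination lam * h1 + c * h2
        rw [key2]
        have h3 := abs_le.mp (hunorm y hy)
        rcases hc with h | h <;> subst h <;>
          nlinarith [mul_nonneg hlam.le (by linarith [h3.1] : (0:ℝ) ≤ 1 + u y),
            mul_nonneg hlam.le (by linarith [h3.2] : (0:ℝ) ≤ 1 - u y)]
    have k1 := key 1 (Or.inl rfl) x hx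
    have k2 := key (-1) (Or.inr rfl) x hx
    have hψx : 0 ≤ ψ x := by
      have hlψ : 0 ≤ lam * ψ x := by linarith
      exact (mul_nonneg_iff_of_pos_left hlam).mp hlψ
    exact ⟨abs_le.mpr ⟨by linarith, by linarith⟩, hψx⟩
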